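/- Let ω = (−1 + i√3)/2 and let Q be an n×n nontrivial cube root Seidel matrix in standard form satisfying Q² = (n−1)·I + μ·Q for a real number μ. Then every eigenvalue λ of Q (i.e., every element λ of the spectrum of Q in ℂ) is an integer congruent to 2 modulo 3: there exists m ∈ ℤ with λ = m and m ≡ 2 (mod 3). -/

import Mathlib

/-- `ω = (−1 + i√3)/2`, a primitive cube root of unity. -/
noncomputable def ω3 : ℂ := (-1 + Complex.I * Real.sqrt 3) / 2

/-- A cube root Seidel matrix: self-adjoint, zero diagonal, off-diagonal
entries among the cube roots of unity. -/
def IsCubeRootSeidel {n : ℕ} (Q : Matrix (Fin n) (Fin n) ℂ) : Prop :=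
  Q.IsHermitian ∧ (∀ i, Q i i = 0) ∧
    ∀ i j, i ≠ j → Q i j = 1 ∨ Q i j = ω3 ∨ Q i j = ω3 ^ 2

/-- Standard form: every off-diagonal entry in the first row and first column
equals 1. -/
def IsStandardForm {n : ℕ} (Q : Matrix (Fin n) (Fin n) ℂ) : Prop :=
  ∀ i j : Fin n, i ≠ j → (i.val = 0 ∨ j.val = 0) → Q i j = 1

/-- Nontrivial: some off-diagonal entry is not equal to 1. -/
def IsNontrivial {n : ℕ} (Q : Matrix (Fin n) (Fin n) ℂ) : Prop :=
  ∃ i j : Fin n, i ≠ j ∧ Q i j ≠ 1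

section OmegaFacts

lemma omega_repr : ω3 = (Complex.ofReal (-1/2)) + (Complex.ofReal (Real.sqrt 3 / 2)) * Complex.I := by
  unfold ω3; push_cast; ring

lemma omega_im : ω3.im = Real.sqrt 3 / 2 := by rw [omega_repr]; simp

lemma sqrt3_pos : (0:ℝ) < Real.sqrt 3 := Real.sqrt_pos.mpr (by norm_num)

lemma omega_quad : ω3 ^ 2 = -1 - ω3 := by
  have hs : (Real.sqrt 3 : ℂ)^2 = 3 := by
    rw [← Complex.ofReal_pow]; norm_cast; exact Real.sq_sqrt (by norm_num)
  have hI : Complex.I ^ 2 = -1 := Complex.I_sq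
  unfold ω3
  linear_combination ((Real.sqrt 3:ℂ)^2/4) * hI - hs/4

lemma omega_cube : ω3 ^ 3 = 1 := by
  have h := omega_quad
  calc ω3^3 = ω3 * ω3^2 := by ring
  _ = ω3 * (-1 - ω3) := by rw [h]
  _ = -ω3 - ω3^2 := by ring
  _ = -ω3 - (-1-ω3) := by rw [h]
  _ = 1 := by ring

/-- extraction of coordinates in the basis 1, ω3 - 1 -/
lemma key_ext {a b c d : ℝ} (h : (a:ℂ) + (b:ℂ)*(ω3-1) = (c:ℂ) + (d:ℂ)*(ω3-1)) :
    a = c ∧ b = d := by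
  have him := congrArg Complex.im h
  simp only [Complex.add_im, Complex.ofReal_im, Complex.mul_im, Complex.ofReal_re,
    Complex.sub_im, Complex.one_im, Complex.sub_re, Complex.one_re, omega_im] at him
  have hbd : b = d := by
    have h3 := sqrt3_pos
    nlinarith [him]
  subst hbd
  have := congrArg Complex.re h
  simp only [Complex.add_re, Complex.ofReal_re, Complex.mul_re, Complex.ofReal_im,
    Complex.sub_re, Complex.sub_im, Complex.one_re, Complex.one_im] at this
  constructor
  · nlinarith [this]
  · rfl

lemma omega_ne_zero : ω3 ≠ 0 := by
  intro h
  have h2 := omega_im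
  rw [h] at h2
  simp at h2
  have := sqrt3_pos
  linarith

/-- decomposition of powers of ω3 over ℤ in the basis 1, ω3 - 1, modulo 3 -/
lemma omega_zpow_decomp (s : ℤ) : ∃ x y : ℤ,
    ω3 ^ s = ((1 + 3*x : ℤ) : ℂ) + ((s + 3*y : ℤ):ℂ) * (ω3 - 1) := by
  have hper : ω3 ^ s = ω3 ^ (s % 3) := by
    conv_lhs => rw [← Int.mul_ediv_add_emod s 3]
    rw [zpow_add₀ omega_ne_zero, zpow_mul]
    norm_num [zpow_ofNat, omega_cube]
  have hr : s % 3 = 0 ∨ s % 3 = 1 ∨ s % 3 = 2 := by omega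
  rcases hr with h | h | h
  · refine ⟨0, -(s/3), ?_⟩
    rw [hper, h]
    have : s + 3 * -(s/3) = 0 := by omega
    rw [this]
    push_cast
    rw [zpow_zero]
    ring
  · refine ⟨0, -(s/3), ?_⟩
    rw [hper, h]
    have : s + 3 * -(s/3) = 1 := by omega
    rw [this]
    push_cast
    rw [zpow_one]
    ring
  · refine ⟨-1, -(s/3) - 1, ?_⟩
    rw [hper, h]
    have h2 : s + 3 * (-(s/3) - 1) = -1 := by omega
    rw [h2]
    have : ω3 ^ (2:ℤ) = ω3 ^ (2:ℕ) := by
      rw [show (2:ℤ) = ((2:ℕ):ℤ) by norm_num, zpow_natCast]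
    rw [this, omega_quad]
    push_cast
    ring

lemma omega_zpow_eq_one {m : ℤ} (h : ω3 ^ m = 1) : (3:ℤ) ∣ m := by
  obtain ⟨x, y, hxy⟩ := omega_zpow_decomp m
  rw [h] at hxy
  have h2 : ((1:ℝ):ℂ) + ((0:ℝ):ℂ)*(ω3-1)
      = (((1 + 3*x : ℤ):ℝ):ℂ) + (((m + 3*y : ℤ):ℝ):ℂ)*(ω3-1) := by
    push_cast
    push_cast at hxy
    linear_combination hxy
  have h3 := (key_ext h2).2
  have h4 : m + 3*y = 0 := by exact_mod_cast h3.symm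
  omega

lemma omega_ne_one : ω3 ≠ 1 := by
  intro h
  have h2 := omega_im
  rw [h] at h2
  simp at h2
  have := sqrt3_pos
  linarith

lemma omega_sq_ne_one : ω3 ^ 2 ≠ 1 := by
  rw [omega_quad]
  intro h
  have him := congrArg Complex.im h
  rw [Complex.sub_im, Complex.neg_im, Complex.one_im, omega_im] at him
  norm_num at him

lemma omega_sq_ne_omega : ω3 ^ 2 ≠ ω3 := by
  rw [omega_quad]
  intro h
  have him := congrArg Complex.im h
  simp [Complex.sub_im, omega_im] at him
  have := sqrt3_pos
  linarith

lemma omega_conj : (starRingEnd ℂ) ω3 = ω3 ^ 2 := by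
  rw [omega_quad]
  unfold ω3
  rw [map_div₀, map_add, map_mul, Complex.conj_I, Complex.conj_ofReal]
  push_cast
  ring_nf
  simp [Complex.ext_iff]
  constructor <;> ring

lemma omega_mul_conj {c : ℂ} (h : c = 1 ∨ c = ω3 ∨ c = ω3^2) :
    c * (starRingEnd ℂ) c = 1 := by
  rcases h with h | h | h <;> subst h
  · simp
  · rw [omega_conj, ← pow_succ']
    exact omega_cube
  · rw [map_pow, omega_conj]
    calc ω3^2 * (ω3^2)^2 = (ω3^3)^2 := by ring
    _ = 1 := by rw [omega_cube]; ring

lemma rat_root_int (q : ℚ) (A B : ℤ) (h : q^2 = A*q + B) : ∃ m : ℤ, q = (m:ℚ) := by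
  have hint : IsIntegral ℤ q := by
    refine ⟨Polynomial.X^(1+1) - (Polynomial.C A * Polynomial.X + Polynomial.C B),
      Polynomial.monic_X_pow_sub (lt_of_le_of_lt Polynomial.degree_linear_le (by norm_num)), ?_⟩
    simp only [Polynomial.eval₂_sub, Polynomial.eval₂_pow, Polynomial.eval₂_X,
      Polynomial.eval₂_add, Polynomial.eval₂_mul, Polynomial.eval₂_C]
    rw [eq_intCast, eq_intCast]
    linear_combination h
  obtain ⟨y, hy⟩ := IsIntegrallyClosed.isIntegral_iff.mp hint
  exact ⟨y, hy.symm⟩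

lemma charpoly_eval {n : ℕ} (Q : Matrix (Fin n) (Fin n) ℂ) (r : ℂ) :
    Q.charpoly.eval r = (r • (1:Matrix (Fin n) (Fin n) ℂ) - Q).det := by
  rw [Matrix.charpoly]
  have h := RingHom.map_det (Polynomial.evalRingHom r) (Matrix.charmatrix Q)
  have h2 : Polynomial.eval r (Matrix.charmatrix Q).det
      = ((Polynomial.evalRingHom r).mapMatrix (Matrix.charmatrix Q)).det := h
  rw [h2]
  congr 1
  ext i j
  by_cases hij : i = j
  · subst hij
    simp [Matrix.charmatrix_apply_eq, Matrix.one_apply_eq]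
  · simp [Matrix.charmatrix_apply_ne _ _ _ hij, Matrix.one_apply_ne hij]

end OmegaFacts

theorem cubeRootSeidel_eigenvalues_integer_mod_three
    (n : ℕ) (Q : Matrix (Fin n) (Fin n) ℂ) (μ : ℝ)
    (hQ : IsCubeRootSeidel Q) (hsf : IsStandardForm Q) (hnt : IsNontrivial Q)
    (heq : Q ^ 2 = ((n : ℂ) - 1) • (1 : Matrix (Fin n) (Fin n) ℂ) + (μ : ℂ) • Q) :
    ∀ lam ∈ spectrum ℂ Q, ∃ m : ℤ, lam = (m : ℂ) ∧ m % 3 = 2 := by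
  classical
  obtain ⟨i₀, j₀, hij₀, hQij₀⟩ := hnt
  have hherm := hQ.1
  have hdiag := hQ.2.1
  have hvals := hQ.2.2
  have hi₀ : i₀.val ≠ 0 := fun h => hQij₀ (hsf i₀ j₀ hij₀ (Or.inl h))
  have hj₀ : j₀.val ≠ 0 := fun h => hQij₀ (hsf i₀ j₀ hij₀ (Or.inr h))
  have hn : 3 ≤ n := by
    have h1 := i₀.isLt
    have h2 := j₀.isLt
    have h3 : i₀.val ≠ j₀.val := fun h => hij₀ (Fin.ext h)
    omega
  set z : Fin n := ⟨0, by omega⟩ with hzdef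
  set o : Fin n := ⟨1, by omega⟩ with hodef
  have hzo : z ≠ o := by
    intro h
    have := congrArg Fin.val h
    simp [hzdef, hodef] at this
  -- the exponent function
  set t : Fin n → Fin n → ℤ := fun i j =>
    if i = j then 0 else if Q i j = 1 then 0 else if Q i j = ω3 then 1 else 2 with htdef
  have htpow : ∀ i j, i ≠ j → Q i j = ω3 ^ (t i j) := by
    intro i j hne
    rcases hvals i j hne with h | h | h
    · simp only [htdef, if_neg hne, if_pos h]
      rw [h, zpow_zero]
    · simp only [htdef, if_neg hne]
      rw [if_neg (by rw [h]; exact omega_ne_one), if_pos h, h, zpow_one]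
    · simp only [htdef, if_neg hne]
      rw [if_neg (by rw [h]; exact omega_sq_ne_one),
        if_neg (by rw [h]; exact omega_sq_ne_omega), h]
      rw [show (2:ℤ) = ((2:ℕ):ℤ) by norm_num, zpow_natCast]
  have htrange : ∀ i j, t i j = 0 ∨ t i j = 1 ∨ t i j = 2 := by
    intro i j
    simp only [htdef]
    split_ifs <;> simp
  have htdiag : ∀ i, t i i = 0 := by
    intro i; simp [htdef]
  have htz : ∀ k, t z k = 0 := by
    intro k
    by_cases hk : z = k
    · rw [← hk]; exact htdiag z
    · simp only [htdef, if_neg hk]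
      rw [if_pos (hsf z k hk (Or.inl rfl))]
  have hskew : ∀ i j, (3:ℤ) ∣ t i j + t j i := by
    intro i j
    by_cases hij : i = j
    · subst hij; rw [htdiag]; simp
    · have h1 : Q i j * Q j i = ω3 ^ (t i j + t j i) := by
        rw [htpow i j hij, htpow j i (Ne.symm hij), zpow_add₀ omega_ne_zero]
      have h2 : Q j i = (starRingEnd ℂ) (Q i j) := by
        rw [← hherm.apply i j]
        simp [RCLike.star_def]
      have h3 : Q i j * Q j i = 1 := by
        rw [h2]
        exact omega_mul_conj (hvals i j hij)
      rw [h3] at h1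
      exact omega_zpow_eq_one h1.symm
  -- master equation
  have master : ∀ i j : Fin n, i ≠ j →
      ∑ k ∈ (Finset.univ.erase i).erase j, Q i k * Q k j = (μ:ℂ) * Q i j := by
    intro i j hne
    have h2 := congrFun (congrFun heq i) j
    rw [pow_two] at h2
    have hL : (Q * Q) i j = ∑ k, Q i k * Q k j := Matrix.mul_apply
    have hR : (((n:ℂ)-1) • (1:Matrix (Fin n) (Fin n) ℂ) + (μ:ℂ) • Q) i j = (μ:ℂ) * Q i j := by
      simp [Matrix.add_apply, Matrix.smul_apply, Matrix.one_apply_ne hne, smul_eq_mul]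
    rw [hL, hR] at h2
    have hjmem : j ∈ Finset.univ.erase i := Finset.mem_erase.mpr ⟨Ne.symm hne, Finset.mem_univ j⟩
    have e1 : ∑ k ∈ (Finset.univ.erase i).erase j, Q i k * Q k j + Q i j * Q j j
        = ∑ k ∈ Finset.univ.erase i, Q i k * Q k j :=
      Finset.sum_erase_add _ _ hjmem
    have e2 : ∑ k ∈ Finset.univ.erase i, Q i k * Q k j + Q i i * Q i j
        = ∑ k, Q i k * Q k j :=
      Finset.sum_erase_add _ _ (Finset.mem_univ i)
    rw [hdiag j, mul_zero, add_zero] at e1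
    rw [hdiag i, zero_mul, add_zero] at e2
    rw [e1, e2, h2]
  -- cardinality
  have hScard : ∀ i j : Fin n, i ≠ j → (((Finset.univ.erase i).erase j).card : ℤ) = (n:ℤ) - 2 := by
    intro i j hne
    have hjmem : j ∈ Finset.univ.erase i := Finset.mem_erase.mpr ⟨Ne.symm hne, Finset.mem_univ j⟩
    rw [Finset.card_erase_of_mem hjmem, Finset.card_erase_of_mem (Finset.mem_univ i)]
    simp only [Finset.card_univ, Fintype.card_fin]
    omega
  -- coordinates of the LHS of the master equation
  have LHS_coord : ∀ i j : Fin n, i ≠ j → ∃ X Y : ℤ,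
      ∑ k ∈ (Finset.univ.erase i).erase j, Q i k * Q k j
        = (((n:ℤ) - 2 + 3*X : ℤ):ℂ)
          + (((∑ k ∈ (Finset.univ.erase i).erase j, (t i k + t k j)) + 3*Y : ℤ):ℂ) * (ω3 - 1) := by
    intro i j hne
    have hterm : ∀ k : Fin n, ∃ x y : ℤ, k ∈ (Finset.univ.erase i).erase j →
        Q i k * Q k j = ((1+3*x:ℤ):ℂ) + ((t i k + t k j + 3*y:ℤ):ℂ)*(ω3-1) := by
      intro k
      by_cases hk : k ∈ (Finset.univ.erase i).erase j
      · have hkj : k ≠ j := (Finset.mem_erase.mp hk).1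
        have hki : k ≠ i := (Finset.mem_erase.mp (Finset.mem_erase.mp hk).2).1
        have hprod : Q i k * Q k j = ω3 ^ (t i k + t k j) := by
          rw [htpow i k (Ne.symm hki), htpow k j hkj, zpow_add₀ omega_ne_zero]
        obtain ⟨x, y, hxy⟩ := omega_zpow_decomp (t i k + t k j)
        exact ⟨x, y, fun _ => by rw [hprod, hxy]⟩
      · exact ⟨0, 0, fun h => absurd h hk⟩
    choose x y hxy using hterm
    refine ⟨∑ k ∈ (Finset.univ.erase i).erase j, x k,
      ∑ k ∈ (Finset.univ.erase i).erase j, y k, ?_⟩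
    rw [Finset.sum_congr rfl (fun k hk => hxy k hk)]
    have e1 : ∑ k ∈ (Finset.univ.erase i).erase j, (1 + 3 * x k)
        = (n:ℤ) - 2 + 3 * ∑ k ∈ (Finset.univ.erase i).erase j, x k := by
      rw [Finset.sum_add_distrib, Finset.sum_const, nsmul_eq_mul, mul_one, ← Finset.mul_sum]
      have := hScard i j hne
      omega
    have e2 : ∑ k ∈ (Finset.univ.erase i).erase j, (t i k + t k j + 3 * y k)
        = (∑ k ∈ (Finset.univ.erase i).erase j, (t i k + t k j))
          + 3 * ∑ k ∈ (Finset.univ.erase i).erase j, y k := by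
      rw [Finset.sum_add_distrib, ← Finset.mul_sum]
    calc ∑ k ∈ (Finset.univ.erase i).erase j,
          (((1+3*x k:ℤ):ℂ) + ((t i k + t k j + 3*y k:ℤ):ℂ)*(ω3-1))
        = ((∑ k ∈ (Finset.univ.erase i).erase j, (1+3*x k) : ℤ):ℂ)
          + ((∑ k ∈ (Finset.univ.erase i).erase j, (t i k + t k j + 3*y k) :ℤ):ℂ) * (ω3-1) := by
          rw [Finset.sum_add_distrib, ← Finset.sum_mul]
          push_cast
          ring
      _ = _ := by rw [e1, e2]
  -- determine μ
  obtain ⟨X₀, Y₀, hXY₀⟩ := LHS_coord z o hzo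
  have hmz := master z o hzo
  rw [hXY₀, hsf z o hzo (Or.inl rfl), mul_one] at hmz
  have hext : ((((n:ℤ)-2+3*X₀ : ℤ):ℝ):ℂ)
      + ((((∑ k ∈ (Finset.univ.erase z).erase o, (t z k + t k o)) + 3*Y₀:ℤ):ℝ):ℂ)*(ω3-1)
      = ((μ:ℝ):ℂ) + ((0:ℝ):ℂ)*(ω3-1) := by
    push_cast
    push_cast at hmz
    linear_combination hmz
  obtain ⟨hMr, -⟩ := key_ext hext
  set M : ℤ := (n:ℤ) - 2 + 3*X₀ with hMdef
  have hMre : (μ:ℝ) = (M:ℝ) := by exact_mod_cast hMr.symm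
  have hMc : (μ:ℂ) = (M:ℂ) := by
    rw [show ((μ:ℝ):ℂ) = ((M:ℝ):ℂ) from congrArg Complex.ofReal hMre]
    push_cast
    ring
  have hMmod : (3:ℤ) ∣ M - ((n:ℤ) - 2) := ⟨X₀, by rw [hMdef]; ring⟩
  -- the general congruence
  have hcong : ∀ i j : Fin n, i ≠ j →
      (3:ℤ) ∣ (∑ k ∈ (Finset.univ.erase i).erase j, (t i k + t k j)) - M * t i j := by
    intro i j hne
    obtain ⟨X', Y', hXY'⟩ := LHS_coord i j hne
    have hm := master i j hne
    rw [hXY', htpow i j hne, hMc] at hm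
    obtain ⟨x', y', hd⟩ := omega_zpow_decomp (t i j)
    rw [hd] at hm
    have hext2 : ((((n:ℤ)-2+3*X' : ℤ):ℝ):ℂ)
        + ((((∑ k ∈ (Finset.univ.erase i).erase j, (t i k + t k j)) + 3*Y':ℤ):ℝ):ℂ)*(ω3-1)
        = (((M*(1+3*x') : ℤ):ℝ):ℂ) + (((M*(t i j+3*y'):ℤ):ℝ):ℂ)*(ω3-1) := by
      push_cast
      push_cast at hm
      linear_combination hm
    have h2 := (key_ext hext2).2
    have h3 : (∑ k ∈ (Finset.univ.erase i).erase j, (t i k + t k j)) + 3*Y'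
        = M*(t i j+3*y') := by exact_mod_cast h2
    exact ⟨M*y' - Y', by linarith [h3]⟩
  -- row and column sums
  set R : Fin n → ℤ := fun i => ∑ k, t i k with hRdef
  set Cl : Fin n → ℤ := fun j => ∑ k, t k j with hCldef
  have hsig : ∀ i j : Fin n, i ≠ j →
      ∑ k ∈ (Finset.univ.erase i).erase j, (t i k + t k j)
        = R i + Cl j - 2 * t i j := by
    intro i j hne
    have hjmem : j ∈ Finset.univ.erase i := Finset.mem_erase.mpr ⟨Ne.symm hne, Finset.mem_univ j⟩
    have e1 : ∑ k ∈ (Finset.univ.erase i).erase j, t i k + t i j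
        = ∑ k ∈ Finset.univ.erase i, t i k := Finset.sum_erase_add _ _ hjmem
    have e2 : ∑ k ∈ Finset.univ.erase i, t i k + t i i = R i :=
      Finset.sum_erase_add _ _ (Finset.mem_univ i)
    have e3 : ∑ k ∈ (Finset.univ.erase i).erase j, t k j + t j j
        = ∑ k ∈ Finset.univ.erase i, t k j := Finset.sum_erase_add _ _ hjmem
    have e4 : ∑ k ∈ Finset.univ.erase i, t k j + t i j = Cl j :=
      Finset.sum_erase_add _ _ (Finset.mem_univ i)
    rw [htdiag i] at e2
    rw [htdiag j] at e3
    rw [Finset.sum_add_distrib]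
    omega
  have hClR : ∀ j, (3:ℤ) ∣ Cl j + R j := by
    intro j
    have : Cl j + R j = ∑ k, (t k j + t j k) := by
      rw [Finset.sum_add_distrib]
    rw [this]
    exact Finset.dvd_sum (fun k _ => hskew k j)
  have hRz : R z = 0 := Finset.sum_eq_zero (fun k _ => htz k)
  have hRj : ∀ j, (3:ℤ) ∣ R j := by
    intro j
    by_cases hj : j = z
    · rw [hj, hRz]
      exact dvd_zero 3
    · have h1 := hcong z j (fun h => hj h.symm)
      rw [hsig z j (fun h => hj h.symm), htz j, hRz] at h1
      have h2 := hClR j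
      omega
  have hM1 : (3:ℤ) ∣ M - 1 := by
    have h1 := hcong i₀ j₀ hij₀
    rw [hsig i₀ j₀ hij₀] at h1
    have h2 := hRj i₀
    have h3 := hRj j₀
    have h4 := hClR j₀
    have h5 : (3:ℤ) ∣ (M + 2) * t i₀ j₀ := by
      have he : (M + 2) * t i₀ j₀
          = (R i₀ + Cl j₀) - (R i₀ + Cl j₀ - 2 * t i₀ j₀ - M * t i₀ j₀) := by ring
      rw [he]
      exact dvd_sub (by omega) h1
    have ht12 : t i₀ j₀ = 1 ∨ t i₀ j₀ = 2 := by
      rcases htrange i₀ j₀ with h | h | h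
      · exfalso
        simp only [htdef, if_neg hij₀] at h
        by_cases hq : Q i₀ j₀ = 1
        · exact hQij₀ hq
        · rw [if_neg hq] at h
          split_ifs at h <;> omega
      · exact Or.inl h
      · exact Or.inr h
    rcases (Int.prime_three.dvd_mul.mp h5) with h | h
    · omega
    · exfalso; rcases ht12 with ht | ht <;> rw [ht] at h <;> omega
  have hn3 : (3:ℤ) ∣ (n:ℤ) := by omega
  -- quadratic satisfied on the spectrum
  have hquadSpec : ∀ r ∈ spectrum ℂ Q, r^2 = (M:ℂ)*r + ((n:ℂ) - 1) := by
    intro r hr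
    by_contra hc
    rw [spectrum.mem_iff] at hr
    apply hr
    have hc' : -(r^2 - (M:ℂ)*r - ((n:ℂ)-1)) ≠ 0 := by
      intro h0
      apply hc
      linear_combination -h0
    have h2 : Q^2 = ((n:ℂ)-1) • (1:Matrix (Fin n) (Fin n) ℂ) + (M:ℂ) • Q := by
      rw [← hMc]; exact heq
    have e1 : (r • (1:Matrix (Fin n) (Fin n) ℂ) - Q) * (((M:ℂ) - r) • (1:Matrix (Fin n) (Fin n) ℂ) - Q)
        = (-(r^2 - (M:ℂ)*r - ((n:ℂ)-1))) • (1:Matrix (Fin n) (Fin n) ℂ) := by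
      have expand : (r • (1:Matrix (Fin n) (Fin n) ℂ) - Q) * (((M:ℂ) - r) • (1:Matrix (Fin n) (Fin n) ℂ) - Q)
          = (r*((M:ℂ)-r)) • (1:Matrix (Fin n) (Fin n) ℂ) - r • Q - ((M:ℂ)-r) • Q + Q^2 := by
        simp only [sub_mul, mul_sub, smul_mul_assoc, mul_smul_comm, one_mul, mul_one,
          smul_smul, pow_two]
        module
      rw [expand, h2]
      module
    have hdetne : (r • (1:Matrix (Fin n) (Fin n) ℂ) - Q).det ≠ 0 := by
      intro h0
      have hdet := congrArg Matrix.det e1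
      rw [Matrix.det_mul, h0, zero_mul, Matrix.det_smul, Matrix.det_one, mul_one] at hdet
      exact pow_ne_zero _ hc' hdet.symm
    rw [Algebra.algebraMap_eq_smul_one]
    exact (Matrix.isUnit_iff_isUnit_det _).mpr (isUnit_iff_ne_zero.mpr hdetne)
  -- spectrum and charpoly
  have hiff : ∀ r : ℂ, r ∈ spectrum ℂ Q ↔ Q.charpoly.eval r = 0 := by
    intro r
    rw [spectrum.mem_iff, Algebra.algebraMap_eq_smul_one, Matrix.isUnit_iff_isUnit_det,
      isUnit_iff_ne_zero, not_not, charpoly_eval]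
  have hroots : ∀ r : ℂ, r ∈ Q.charpoly.roots ↔ r ∈ spectrum ℂ Q := by
    intro r
    rw [Polynomial.mem_roots', hiff]
    constructor
    · exact fun h => h.2
    · exact fun h => ⟨Q.charpoly_monic.ne_zero, h⟩
  have hcardroots : Multiset.card Q.charpoly.roots = n := by
    have hsplit : Q.charpoly.Splits := IsAlgClosed.splits _
    rw [Polynomial.splits_iff_card_roots.mp hsplit, Matrix.charpoly_natDegree_eq_dim,
      Fintype.card_fin]
  have htr : Q.charpoly.roots.sum = 0 := by
    rw [← Matrix.trace_eq_sum_roots_charpoly]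
    unfold Matrix.trace
    exact Finset.sum_eq_zero (fun i _ => hdiag i)
  -- final argument
  intro lam hlam
  have hq1 : lam^2 = (M:ℂ)*lam + ((n:ℂ)-1) := hquadSpec lam hlam
  have hrat : ∃ qq : ℚ, lam = (qq:ℂ) := by
    by_cases hcase : lam = (M:ℂ) - lam
    · refine ⟨(M:ℚ)/2, ?_⟩
      push_cast
      linear_combination hcase/2
    · have hall : ∀ r ∈ Q.charpoly.roots, r = lam ∨ r = (M:ℂ) - lam := by
        intro r hr
        have hr' := hquadSpec r ((hroots r).mp hr)
        have hmul : (r - lam) * (r - ((M:ℂ) - lam)) = 0 := by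
          linear_combination hr' - hq1
        rcases mul_eq_zero.mp hmul with h | h
        · exact Or.inl (sub_eq_zero.mp h)
        · exact Or.inr (sub_eq_zero.mp h)
      set p := Q.charpoly.roots.count lam with hpdef
      have hlamroot : lam ∈ Q.charpoly.roots := (hroots lam).mpr hlam
      have hp1 : 1 ≤ p := Multiset.one_le_count_iff_mem.mpr hlamroot
      have hple : p ≤ n := by
        rw [← hcardroots]
        exact Multiset.count_le_card lam _
      have hfil : Q.charpoly.roots.filter (· = lam) = Multiset.replicate p lam :=
        Multiset.filter_eq' _ _
      have hnotcard : Multiset.card (Q.charpoly.roots.filter (fun r => ¬ r = lam)) = n - p := by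
        have := congrArg Multiset.card (Multiset.filter_add_not (fun r => r = lam) Q.charpoly.roots)
        rw [Multiset.card_add, hcardroots] at this
        have hc2 : Multiset.card (Multiset.filter (fun r => r = lam) Q.charpoly.roots) = p := by
          rw [hfil, Multiset.card_replicate]
        omega
      have hnot : Q.charpoly.roots.filter (fun r => ¬ r = lam)
          = Multiset.replicate (n - p) ((M:ℂ) - lam) := by
        rw [Multiset.eq_replicate]
        refine ⟨hnotcard, ?_⟩
        intro b hb
        have hb2 := Multiset.mem_filter.mp hb
        rcases hall b hb2.1 with h | h
        · exact absurd h hb2.2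
        · exact h
      have hsum : (0:ℂ) = p • lam + (n - p) • ((M:ℂ) - lam) := by
        rw [← htr]
        conv_lhs => rw [← Multiset.filter_add_not (fun r => r = lam) Q.charpoly.roots]
        rw [Multiset.sum_add, hfil, hnot, Multiset.sum_replicate, Multiset.sum_replicate]
      have hsum' : (p:ℂ) * lam + ((n:ℂ) - p) * ((M:ℂ) - lam) = 0 := by
        rw [nsmul_eq_mul, nsmul_eq_mul] at hsum
        have hcast : ((n - p : ℕ):ℂ) = (n:ℂ) - (p:ℂ) := by
          push_cast [Nat.cast_sub hple]
          ring
        rw [hcast] at hsum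
        linear_combination -hsum
      by_cases hpq : 2 * p = n
      · exfalso
        have hn2 : (n:ℂ) = 2*(p:ℂ) := by exact_mod_cast congrArg (Nat.cast : ℕ → ℂ) hpq.symm
        have hpM : (p:ℂ) * (M:ℂ) = 0 := by
          linear_combination hsum' - (((M:ℂ) - lam)) * hn2
        have hp0 : (p:ℂ) ≠ 0 := Nat.cast_ne_zero.mpr (by omega)
        have hM0 : (M:ℂ) = 0 := by
          rcases mul_eq_zero.mp hpM with h | h
          · exact absurd h hp0
          · exact h
        have : M = 0 := by exact_mod_cast hM0
        omega
      · refine ⟨(((p:ℚ) - n) * M) / (2*(p:ℚ) - n), ?_⟩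
        have hden : (2*(p:ℂ) - (n:ℂ)) ≠ 0 := by
          intro h
          apply hpq
          have : ((2*p:ℕ):ℂ) = ((n:ℕ):ℂ) := by push_cast; linear_combination h
          exact_mod_cast this
        rw [Rat.cast_div]
        rw [eq_div_iff (by push_cast; exact hden)]
        push_cast
        linear_combination hsum'
  obtain ⟨qq, hqq⟩ := hrat
  have hqrat : qq^2 = (M:ℚ)*qq + ((n:ℚ) - 1) := by
    have h := hq1
    rw [hqq] at h
    exact_mod_cast h
  obtain ⟨m, hm⟩ := rat_root_int qq M ((n:ℤ) - 1) (by push_cast; linear_combination hqrat)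
  refine ⟨m, ?_, ?_⟩
  · rw [hqq, hm]
    push_cast
    ring
  · have hmz2 : (m:ℚ)^2 = (M:ℚ)*m + ((n:ℚ) - 1) := by rw [← hm]; exact hqrat
    have hmz : m^2 = M*m + ((n:ℤ) - 1) := by exact_mod_cast hmz2
    have hdvd : (3:ℤ) ∣ m^2 - m + 1 := by
      have he : m^2 - m + 1 = (M - 1)*m + (n:ℤ) := by linear_combination hmz
      rw [he]
      exact dvd_add (Dvd.dvd.mul_right hM1 m) hn3
    have hz3 : ((m:ZMod 3))^2 - (m:ZMod 3) + 1 = 0 := by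
      have hcast : ((m^2 - m + 1 : ℤ) : ZMod 3) = 0 :=
        (ZMod.intCast_zmod_eq_zero_iff_dvd _ 3).mpr hdvd
      push_cast at hcast
      linear_combination hcast
    have hm2 : (m : ZMod 3) = 2 := by
      revert hz3
      generalize (m : ZMod 3) = a
      revert a
      decide
    have hmod : m % 3 = 2 % 3 := by
      have : (m : ZMod 3) = ((2:ℤ) : ZMod 3) := by rw [hm2]; norm_num
      exact (ZMod.intCast_eq_intCast_iff' _ _ _).mp this
    omega
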